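/- Sub-Pfaffians of S(M) compute arbitrary minors of M: let M be an n×n matrix over ℂ, M̃ = M with its columns reversed, and S(M) = [[0, M̃], [−M̃ᵀ, 0]] the skew-symmetric matrix indexed by Fin n ⊕ Fin n. For any finsets I, J ⊆ Fin n with |I| = |J| = r, consider the principal submatrix of S(M) on the index set (inl '' I) ∪ (inr '' J̃), where J̃ = {n−1−j : j ∈ J}, with indices ordered as the elements of I in increasing order followed by the elements of J̃ in increasing order. The Pfaffian of this 2r×2r principal submatrix equals det(M_{I,J}), the determinant of the submatrix of M with rows I and columns J each taken in increasing order. -/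

import Mathlib

open Matrix

/-- The Pfaffian of a `2n × 2n` matrix over `ℂ`, given by the averaged sum over all
permutations: `pf A = (1 / (2^n n!)) ∑_σ sign σ ∏_i A (σ (2i)) (σ (2i+1))`. -/
noncomputable def pf {n : ℕ} (A : Matrix (Fin (2 * n)) (Fin (2 * n)) ℂ) : ℂ :=
  (1 / (2 ^ n * (n.factorial : ℂ))) *
    ∑ σ : Equiv.Perm (Fin (2 * n)),
      ((Equiv.Perm.sign σ : ℤ) : ℂ) *
        ∏ i : Fin n,
          A (σ ⟨2 * i.val, by have := i.isLt; omega⟩)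
            (σ ⟨2 * i.val + 1, by have := i.isLt; omega⟩)


open Matrix Equiv

namespace PfSub

variable {r : ℕ}

def p0 (i : Fin r) : Fin (2*r) := ⟨2*i.val, by have := i.isLt; omega⟩
def p1 (i : Fin r) : Fin (2*r) := ⟨2*i.val+1, by have := i.isLt; omega⟩

def eE (r : ℕ) : Fin (2*r) ≃ Fin r ⊕ Fin r :=
  (finCongr (by omega : 2*r = r + r)).trans finSumFinEquiv.symm

lemma eE_left (a : Fin r) (h : (a : ℕ) < 2*r) : eE r ⟨a, h⟩ = Sum.inl a := by
  rw [eE]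
  simp only [trans_apply, finCongr_apply, Equiv.symm_apply_eq, finSumFinEquiv_apply_left]
  apply Fin.ext
  simp

lemma eE_right (b : Fin r) (h : r + (b : ℕ) < 2*r) : eE r ⟨r + b, h⟩ = Sum.inr b := by
  rw [eE]
  simp only [trans_apply, finCongr_apply, Equiv.symm_apply_eq, finSumFinEquiv_apply_right]
  apply Fin.ext
  simp [Fin.natAdd]

def qE (r : ℕ) : Fin (2*r) ≃ Fin r × Bool where
  toFun k := (⟨k.val/2, by have := k.isLt; omega⟩, decide ((k:ℕ) % 2 = 1))
  invFun x := ⟨2*x.1.val + (bif x.2 then 1 else 0), by have := x.1.isLt; cases x.2 <;> simp <;> omega⟩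
  left_inv k := by
    apply Fin.ext
    by_cases h : (k:ℕ) % 2 = 1 <;> simp [h] <;> omega
  right_inv x := by
    obtain ⟨i, b⟩ := x
    cases b <;> simp only [cond_true, cond_false, Prod.ext_iff] <;>
      refine ⟨Fin.ext ?_, ?_⟩ <;> simp <;> omega

lemma qE_p0 (i : Fin r) : qE r (p0 i) = (i, false) := by
  simp only [qE, p0, coe_fn_mk, Prod.ext_iff]
  refine ⟨Fin.ext ?_, ?_⟩ <;> simp <;> omega

lemma qE_p1 (i : Fin r) : qE r (p1 i) = (i, true) := by
  simp only [qE, p1, coe_fn_mk, Prod.ext_iff]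
  refine ⟨Fin.ext ?_, ?_⟩ <;> simp <;> omega

lemma qE_symm_false (i : Fin r) : (qE r).symm (i, false) = p0 i := by
  rw [Equiv.symm_apply_eq, qE_p0]

lemma qE_symm_true (i : Fin r) : (qE r).symm (i, true) = p1 i := by
  rw [Equiv.symm_apply_eq, qE_p1]

end PfSub
open Matrix Equiv

namespace PfSub

variable {r : ℕ}

/-- The base "riffle with reversal" permutation: `2i ↦ i`, `2i+1 ↦ 2r-1-i`. -/
def Bp (r : ℕ) : Equiv.Perm (Fin (2*r)) where
  toFun k := if (k:ℕ) % 2 = 0 then ⟨k.val/2, by have := k.isLt; omega⟩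
    else ⟨2*r-1-k.val/2, by have := k.isLt; omega⟩
  invFun m := if h : (m:ℕ) < r then ⟨2*m.val, by omega⟩
    else ⟨2*(2*r-1-m.val)+1, by have := m.isLt; omega⟩
  left_inv k := by
    have := k.isLt
    apply Fin.ext
    by_cases h : (k:ℕ) % 2 = 0 <;> simp only [h, if_true, if_false, reduceIte] <;> split <;>
      simp_all <;> omega
  right_inv m := by
    have := m.isLt
    apply Fin.ext
    by_cases h : (m:ℕ) < r <;> simp only [h, dif_pos, dif_neg, not_false_iff, reduceDIte] <;>
      rw [show ∀ x : ℕ, ∀ hx : x < 2*r, ((⟨x, hx⟩ : Fin (2*r)) : ℕ) = x from fun _ _ => rfl] <;>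
      split <;> simp <;> omega

lemma Bp_p0 (i : Fin r) : Bp r (p0 i) = ⟨(i:ℕ), by have := i.isLt; omega⟩ := by
  have := i.isLt
  simp only [Bp, p0, coe_fn_mk]
  split <;> [apply Fin.ext; skip] <;> simp <;> omega

lemma Bp_p1 (i : Fin r) : Bp r (p1 i) = ⟨2*r-1-(i:ℕ), by have := i.isLt; omega⟩ := by
  have := i.isLt
  simp only [Bp, p1, coe_fn_mk]
  split <;> [omega; apply Fin.ext] <;> simp <;> omega

lemma eE_Bp_p0 (i : Fin r) : eE r (Bp r (p0 i)) = Sum.inl i := by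
  rw [Bp_p0]
  exact eE_left i _

lemma eE_Bp_p1 (i : Fin r) : eE r (Bp r (p1 i)) = Sum.inr i.rev := by
  rw [Bp_p1]
  have hi := i.isLt
  have : (⟨2*r-1-(i:ℕ), by omega⟩ : Fin (2*r)) = ⟨r + (i.rev : ℕ), by
      have := i.rev.isLt; omega⟩ := by
    apply Fin.ext
    simp [Fin.rev]
    omega
  rw [this]
  exact eE_right i.rev _

end PfSub
open Matrix Equiv

namespace PfSub

variable {r : ℕ}

def Tw (s : Fin r → Bool) : Equiv.Perm (Fin (2*r)) :=
  ((qE r).symm.permCongr) (Equiv.prodCongrRight (fun i => bif s i then Equiv.swap false true else 1))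

def Dp (α β : Equiv.Perm (Fin r)) : Equiv.Perm (Fin (2*r)) :=
  ((qE r).symm.permCongr) (Equiv.prodCongrLeft (fun b : Bool => bif b then β else α))

lemma Tw_p0 (s : Fin r → Bool) (i : Fin r) : Tw s (p0 i) = (qE r).symm (i, s i) := by
  rw [Tw, ← qE_symm_false i, permCongr_apply, Equiv.symm_symm, Equiv.apply_symm_apply]
  congr 1
  rw [prodCongrRight_apply]
  cases hs : s i <;> simp

lemma Tw_p1 (s : Fin r → Bool) (i : Fin r) : Tw s (p1 i) = (qE r).symm (i, !(s i)) := by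
  rw [Tw, ← qE_symm_true i, permCongr_apply, Equiv.symm_symm, Equiv.apply_symm_apply]
  congr 1
  rw [prodCongrRight_apply]
  cases hs : s i <;> simp

lemma Dp_apply (α β : Equiv.Perm (Fin r)) (i : Fin r) (b : Bool) :
    Dp α β ((qE r).symm (i, b)) = (qE r).symm ((bif b then β else α) i, b) := by
  rw [Dp, permCongr_apply, Equiv.symm_symm, Equiv.apply_symm_apply, prodCongrLeft_apply]

def FF (α β : Equiv.Perm (Fin r)) (s : Fin r → Bool) : Equiv.Perm (Fin (2*r)) :=
  Bp r * Dp α β * Tw s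

lemma eE_FF_p0 (α β : Equiv.Perm (Fin r)) (s : Fin r → Bool) (i : Fin r) :
    eE r (FF α β s (p0 i)) = bif s i then Sum.inr ((β i).rev) else Sum.inl (α i) := by
  rw [FF, Equiv.Perm.mul_apply, Equiv.Perm.mul_apply, Tw_p0, Dp_apply]
  cases hs : s i
  · rw [cond_false, cond_false, qE_symm_false, eE_Bp_p0]
  · rw [cond_true, cond_true, qE_symm_true, eE_Bp_p1]

lemma eE_FF_p1 (α β : Equiv.Perm (Fin r)) (s : Fin r → Bool) (i : Fin r) :
    eE r (FF α β s (p1 i)) = bif s i then Sum.inl (α i) else Sum.inr ((β i).rev) := by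
  rw [FF, Equiv.Perm.mul_apply, Equiv.Perm.mul_apply, Tw_p1, Dp_apply]
  cases hs : s i
  · rw [cond_false]
    rw [show (!false) = true from rfl, cond_true, qE_symm_true, eE_Bp_p1]
  · rw [cond_true]
    rw [show (!true) = false from rfl, cond_false, qE_symm_false, eE_Bp_p0]

lemma sign_Tw (s : Fin r → Bool) :
    Equiv.Perm.sign (Tw s) = ∏ i : Fin r, (bif s i then (-1 : ℤˣ) else 1) := by
  rw [Tw, Equiv.Perm.sign_permCongr, Equiv.Perm.sign_prodCongrRight]
  refine Finset.prod_congr rfl fun i _ => ?_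
  cases s i <;> simp [Equiv.Perm.sign_swap]

lemma sign_Dp (α β : Equiv.Perm (Fin r)) :
    Equiv.Perm.sign (Dp α β) = Equiv.Perm.sign α * Equiv.Perm.sign β := by
  rw [Dp, Equiv.Perm.sign_permCongr, Equiv.Perm.sign_prodCongrLeft, Fintype.prod_bool]
  simp [mul_comm]

lemma sign_FF (α β : Equiv.Perm (Fin r)) (s : Fin r → Bool) :
    Equiv.Perm.sign (FF α β s) = Equiv.Perm.sign (Bp r) *
      (Equiv.Perm.sign α * Equiv.Perm.sign β) * ∏ i : Fin r, (bif s i then (-1 : ℤˣ) else 1) := by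
  rw [FF, _root_.map_mul, _root_.map_mul, sign_Tw, sign_Dp]

end PfSub
open Matrix Equiv

namespace PfSub

def embE (r : ℕ) : Fin (2*r) ≃ {k : Fin (2*(r+1)) // 2 ≤ (k : ℕ)} where
  toFun k := ⟨⟨k.val + 2, by have := k.isLt; omega⟩, by simp⟩
  invFun m := ⟨m.val.val - 2, by have := m.1.isLt; have := m.2; omega⟩
  left_inv k := by apply Fin.ext; simp
  right_inv m := by
    have := m.2
    apply Subtype.ext
    apply Fin.ext
    simp
    omega

def BpS (r : ℕ) : Equiv.Perm (Fin (2*r+2)) := Bp (r+1)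

def XdS (r : ℕ) : Equiv.Perm (Fin (2*r+2)) := (Bp r).extendDomain (embE r)

lemma Bp_succ (r : ℕ) :
    finRotate (2*r+2) * BpS r = Equiv.swap (0 : Fin (2*r+2)) 1 * XdS r := by
  have hBp2 : ∀ m : ℕ, ∀ hm : m < 2*r+2,
      ((BpS r ⟨m, hm⟩ : Fin (2*r+2)) : ℕ)
        = if m % 2 = 0 then m/2 else 2*r+1-m/2 := by
    intro m hm
    show ((Bp (r+1)) ⟨m, by omega⟩ : Fin (2*(r+1))).val = _
    simp only [Bp, coe_fn_mk]
    split <;> simp <;> omega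
  have hBp1 : ∀ m : ℕ, ∀ hm : m < 2*r, ((Bp r ⟨m, hm⟩ : Fin (2*r)) : ℕ)
      = if m % 2 = 0 then m/2 else 2*r-1-m/2 := by
    intro m hm
    simp only [Bp, coe_fn_mk]
    split <;> simp <;> omega
  have hemb : ∀ a : Fin (2*r),
      (((embE r a : {k : Fin (2*(r+1)) // 2 ≤ (k:ℕ)}) : Fin (2*(r+1))) : ℕ) = (a : ℕ) + 2 := by
    intro a; simp [embE]
  have hswap : ∀ x : Fin (2*r+2), 2 ≤ (x : ℕ) → Equiv.swap (0 : Fin (2*r+2)) 1 x = x := by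
    intro x hx
    apply Equiv.swap_apply_of_ne_of_ne
    · intro h; rw [h] at hx; simp at hx
    · intro h; rw [h] at hx; simp [Fin.val_one] at hx
  have hadd : ∀ a : Fin (2*r+2), ((a + 1 : Fin (2*r+2)) : ℕ) = ((a:ℕ)+1) % (2*r+2) := by
    intro a; rw [Fin.add_def]; simp [Fin.val_one]
  apply Equiv.ext
  intro k
  have hk : (k : ℕ) < 2*r+2 := k.isLt
  rw [Equiv.Perm.mul_apply, Equiv.Perm.mul_apply]
  apply Fin.ext
  have hkmk : k = ⟨(k:ℕ), hk⟩ := by apply Fin.ext; rfl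
  rcases Nat.lt_or_ge (k : ℕ) 2 with h2 | h2
  · -- k = 0 or 1 : extendDomain fixes k
    have hxd0 : XdS r k = k :=
      Equiv.Perm.extendDomain_apply_not_subtype (Bp r) (embE r) (by omega : ¬ 2 ≤ (k:ℕ))
    rw [hxd0]
    obtain hk0 | hk1 : (k:ℕ) = 0 ∨ (k:ℕ) = 1 := by omega
    · have : k = 0 := by apply Fin.ext; simp [hk0]
      subst this
      rw [Equiv.swap_apply_left]
      have h00 : (0 : Fin (2*r+2)) = ⟨0, by omega⟩ := rfl
      rw [finRotate_succ_apply, hadd, h00, hBp2]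
      simp [Fin.val_one]
    · have : k = 1 := by apply Fin.ext; rw [hk1]; simp [Fin.val_one]
      subst this
      rw [Equiv.swap_apply_right]
      have h11 : (1 : Fin (2*r+2)) = ⟨1, by omega⟩ := by apply Fin.ext; simp [Fin.val_one]
      rw [finRotate_succ_apply, hadd, h11, hBp2]
      simp
  · -- 2 ≤ k
    have hxd : XdS r k
        = ((embE r (Bp r ⟨(k:ℕ) - 2, by omega⟩) : {k : Fin (2*(r+1)) // 2 ≤ (k:ℕ)}) : Fin (2*(r+1))) := by
      have hkimg : k = ((embE r ⟨(k:ℕ) - 2, by omega⟩ : {k : Fin (2*(r+1)) // 2 ≤ (k:ℕ)}) : Fin (2*(r+1))) := by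
        apply Fin.ext
        rw [hemb]
        simp only [Fin.val_mk]
        omega
      show ((Bp r).extendDomain (embE r)) k = _
      conv_lhs => rw [hkimg]
      rw [Equiv.Perm.extendDomain_apply_image]
    have hBk : ((BpS r k) : ℕ) = if (k:ℕ) % 2 = 0 then (k:ℕ)/2 else 2*r+1-(k:ℕ)/2 := by
      conv_lhs => rw [hkmk]
      exact hBp2 _ hk
    rw [hxd, hswap _ (by rw [hemb]; omega)]
    rw [finRotate_succ_apply, hadd, hBk, hemb, hBp1]
    rcases Nat.even_or_odd (k : ℕ) with he | ho
    · have hm : (k:ℕ) % 2 = 0 := Nat.even_iff.mp he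
      have hm' : ((k:ℕ) - 2) % 2 = 0 := by omega
      rw [if_pos hm, if_pos hm']
      rw [Nat.mod_eq_of_lt (by omega)]
      omega
    · have hm : ¬ ((k:ℕ) % 2 = 0) := by rw [Nat.odd_iff] at ho; omega
      have hm' : ¬ (((k:ℕ) - 2) % 2 = 0) := by rw [Nat.odd_iff] at ho; omega
      rw [if_neg hm, if_neg hm']
      rw [Nat.mod_eq_of_lt (by omega)]
      omega

lemma sign_Bp (r : ℕ) : Equiv.Perm.sign (Bp r) = 1 := by
  induction r with
  | zero =>
    have : Bp 0 = 1 := by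
      apply Equiv.ext
      intro k
      exact absurd k.isLt (by omega)
    rw [this]
    simp
  | succ r ih =>
    have hsg := congrArg Equiv.Perm.sign (Bp_succ r)
    have e1 : Equiv.Perm.sign (BpS r) = Equiv.Perm.sign (Bp (r+1)) := rfl
    have e2 : Equiv.Perm.sign (XdS r) = Equiv.Perm.sign ((Bp r).extendDomain (embE r)) := rfl
    rw [_root_.map_mul, _root_.map_mul, e1, e2, Equiv.Perm.sign_extendDomain, ih] at hsg
    have hrot : Equiv.Perm.sign (finRotate (2*r+2)) = -1 := by
      rw [sign_finRotate]
      exact Odd.neg_one_pow ⟨r, by omega⟩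
    have hsw : Equiv.Perm.sign (Equiv.swap (0 : Fin (2*r+2)) 1) = -1 := by
      apply Equiv.Perm.sign_swap
      intro h
      have := congrArg Fin.val h
      simp [Fin.val_one] at this
    rw [hrot, hsw, mul_one] at hsg
    exact mul_left_cancel hsg

end PfSub
open Matrix Equiv

namespace PfSub

variable {r : ℕ}

def AA (N : Matrix (Fin r) (Fin r) ℂ) : Matrix (Fin (2*r)) (Fin (2*r)) ℂ :=
  (Matrix.fromBlocks 0 (Matrix.of fun a b => N a b.rev)
    (-(Matrix.of fun (a b : Fin r) => N a b.rev)ᵀ) 0).submatrix (eE r) (eE r)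

lemma AA_ll {N : Matrix (Fin r) (Fin r) ℂ} {x y : Fin (2*r)} {a a' : Fin r}
    (hx : eE r x = Sum.inl a) (hy : eE r y = Sum.inl a') : AA N x y = 0 := by
  rw [AA, submatrix_apply, hx, hy]; simp

lemma AA_rr {N : Matrix (Fin r) (Fin r) ℂ} {x y : Fin (2*r)} {b b' : Fin r}
    (hx : eE r x = Sum.inr b) (hy : eE r y = Sum.inr b') : AA N x y = 0 := by
  rw [AA, submatrix_apply, hx, hy]; simp

lemma AA_lr {N : Matrix (Fin r) (Fin r) ℂ} {x y : Fin (2*r)} {a b : Fin r}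
    (hx : eE r x = Sum.inl a) (hy : eE r y = Sum.inr b) : AA N x y = N a b.rev := by
  rw [AA, submatrix_apply, hx, hy]; simp

lemma AA_rl {N : Matrix (Fin r) (Fin r) ℂ} {x y : Fin (2*r)} {a b : Fin r}
    (hx : eE r x = Sum.inr b) (hy : eE r y = Sum.inl a) : AA N x y = -(N a b.rev) := by
  rw [AA, submatrix_apply, hx, hy]; simp

noncomputable def T (N : Matrix (Fin r) (Fin r) ℂ) (σ : Equiv.Perm (Fin (2*r))) : ℂ :=
  ((Equiv.Perm.sign σ : ℤ) : ℂ) * ∏ i : Fin r, AA N (σ (p0 i)) (σ (p1 i))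

lemma T_eq_zero {N : Matrix (Fin r) (Fin r) ℂ} {σ : Equiv.Perm (Fin (2*r))} (i : Fin r)
    (h : (eE r (σ (p0 i))).isLeft = (eE r (σ (p1 i))).isLeft) : T N σ = 0 := by
  rw [T]
  apply mul_eq_zero_of_right
  apply Finset.prod_eq_zero (Finset.mem_univ i)
  rcases hx : eE r (σ (p0 i)) with a | b <;> rcases hy : eE r (σ (p1 i)) with a' | b'
  · exact AA_ll hx hy
  · rw [hx, hy] at h; simp at h
  · rw [hx, hy] at h; simp at h
  · exact AA_rr hx hy

lemma FF_inj : Function.Injective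
    (fun x : Equiv.Perm (Fin r) × Equiv.Perm (Fin r) × (Fin r → Bool) => FF x.1 x.2.1 x.2.2) := by
  rintro ⟨α, β, s⟩ ⟨α', β', s'⟩ h
  simp only at h
  have h0 : ∀ i, (bif s i then Sum.inr ((β i).rev) else Sum.inl (α i))
      = (bif s' i then Sum.inr ((β' i).rev) else Sum.inl (α' i)) := by
    intro i
    rw [← eE_FF_p0 α β s i, ← eE_FF_p0 α' β' s' i, h]
  have h1 : ∀ i, (bif s i then Sum.inl (α i) else Sum.inr ((β i).rev))
      = (bif s' i then Sum.inl (α' i) else Sum.inr ((β' i).rev)) := by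
    intro i
    rw [← eE_FF_p1 α β s i, ← eE_FF_p1 α' β' s' i, h]
  have hs : s = s' := by
    funext i
    have := h0 i
    cases hsi : s i <;> cases hsi' : s' i <;> rw [hsi, hsi'] at this <;> simp at this <;> rfl
  subst hs
  have hαβ : ∀ i, α i = α' i ∧ β i = β' i := by
    intro i
    have e0 := h0 i
    have e1 := h1 i
    cases hsi : s i <;> rw [hsi] at e0 e1 <;> simp at e0 e1 <;>
      first
      | exact ⟨e0, e1⟩
      | exact ⟨e1, e0⟩
  have hα : α = α' := Equiv.ext fun i => (hαβ i).1
  have hβ : β = β' := Equiv.ext fun i => (hαβ i).2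
  rw [hα, hβ]

lemma sum_eq_inl_elim {x : Fin r ⊕ Fin r} (h : x.isLeft = true) :
    x = Sum.inl (Sum.elim id id x) := by cases x <;> simp at h ⊢

lemma sum_eq_inr_elim {x : Fin r ⊕ Fin r} (h : x.isLeft = false) :
    x = Sum.inr (Sum.elim id id x) := by cases x <;> simp at h ⊢

lemma FF_surj (σ : Equiv.Perm (Fin (2*r)))
    (hgood : ∀ i : Fin r, (eE r (σ (p0 i))).isLeft ≠ (eE r (σ (p1 i))).isLeft) :
    ∃ x : Equiv.Perm (Fin r) × Equiv.Perm (Fin r) × (Fin r → Bool), FF x.1 x.2.1 x.2.2 = σ := by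
  classical
  set s : Fin r → Bool := fun i => !(eE r (σ (p0 i))).isLeft with hsdef
  set u : Fin r → Fin (2*r) := fun i => bif s i then p1 i else p0 i with hudef
  set v : Fin r → Fin (2*r) := fun i => bif s i then p0 i else p1 i with hvdef
  set af : Fin r → Fin r := fun i => Sum.elim id id (eE r (σ (u i))) with hafdef
  set bf : Fin r → Fin r := fun i => Fin.rev (Sum.elim id id (eE r (σ (v i)))) with hbfdef
  have hA : ∀ i, eE r (σ (u i)) = Sum.inl (af i) := by
    intro i
    apply sum_eq_inl_elim
    cases hsi : s i
    · have : (eE r (σ (p0 i))).isLeft = true := by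
        have := hsi
        rw [hsdef] at this
        simpa using this
      rw [hudef]
      simpa [hsi] using this
    · have hps : (eE r (σ (p0 i))).isLeft = false := by
        have := hsi
        rw [hsdef] at this
        simpa using this
      have : (eE r (σ (p1 i))).isLeft = true := by
        have hg := hgood i
        rw [hps] at hg
        simpa using (Ne.symm hg)
      rw [hudef]
      simpa [hsi] using this
  have hB : ∀ i, eE r (σ (v i)) = Sum.inr ((bf i).rev) := by
    intro i
    have hbf : (bf i).rev = Sum.elim id id (eE r (σ (v i))) := by
      rw [hbfdef]; simp [Fin.rev_rev]
    rw [hbf]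
    apply sum_eq_inr_elim
    cases hsi : s i
    · have hps : (eE r (σ (p0 i))).isLeft = true := by
        have := hsi
        rw [hsdef] at this
        simpa using this
      have : (eE r (σ (p1 i))).isLeft = false := by
        have hg := hgood i
        rw [hps] at hg
        simpa using (Ne.symm hg)
      rw [hvdef]
      simpa [hsi] using this
    · have : (eE r (σ (p0 i))).isLeft = false := by
        have := hsi
        rw [hsdef] at this
        simpa using this
      rw [hvdef]
      simpa [hsi] using this
  have hu_inj : Function.Injective u := by
    intro i j hij
    have := congrArg Fin.val hij
    rw [hudef] at this
    simp only at this
    cases hsi : s i <;> cases hsj : s j <;> rw [hsi, hsj] at this <;>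
      simp only [cond_true, cond_false, p0, p1] at this <;> exact Fin.ext (by omega)
  have hv_inj : Function.Injective v := by
    intro i j hij
    have := congrArg Fin.val hij
    rw [hvdef] at this
    simp only at this
    cases hsi : s i <;> cases hsj : s j <;> rw [hsi, hsj] at this <;>
      simp only [cond_true, cond_false, p0, p1] at this <;> exact Fin.ext (by omega)
  have haf_inj : Function.Injective af := by
    intro i j hij
    apply hu_inj
    apply σ.injective
    apply (eE r).injective
    rw [hA i, hA j, hij]
  have hbf_inj : Function.Injective bf := by
    intro i j hij
    apply hv_inj
    apply σ.injective
    apply (eE r).injective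
    rw [hB i, hB j, hij]
  refine ⟨⟨Equiv.ofBijective af (Finite.injective_iff_bijective.mp haf_inj),
    Equiv.ofBijective bf (Finite.injective_iff_bijective.mp hbf_inj), s⟩, ?_⟩
  apply Equiv.ext
  intro k
  apply (eE r).injective
  simp only
  rcases hqk : qE r k with ⟨i, b⟩
  have hk : k = (qE r).symm (i, b) := by rw [← hqk, Equiv.symm_apply_apply]
  cases b
  · rw [hk, qE_symm_false, eE_FF_p0]
    cases hsi : s i
    · have := hA i
      rw [hudef] at this
      simp only [hsi, cond_false] at this ⊢
      rw [this]
      rfl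
    · have := hB i
      rw [hvdef] at this
      simp only [hsi, cond_true] at this ⊢
      rw [this]
      rfl
  · rw [hk, qE_symm_true, eE_FF_p1]
    cases hsi : s i
    · have := hB i
      rw [hvdef] at this
      simp only [hsi, cond_false] at this ⊢
      rw [this]
      rfl
    · have := hA i
      rw [hudef] at this
      simp only [hsi, cond_true] at this ⊢
      rw [this]
      rfl

end PfSub
open Matrix Equiv

namespace PfSub

variable {r : ℕ}

lemma T_FF (N : Matrix (Fin r) (Fin r) ℂ) (α β : Equiv.Perm (Fin r)) (s : Fin r → Bool) :
    T N (FF α β s) = ((Equiv.Perm.sign α : ℤ) : ℂ) * ((Equiv.Perm.sign β : ℤ) : ℂ) *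
      ∏ i : Fin r, N (α i) (β i) := by
  rw [T]
  have hprod : ∏ i : Fin r, AA N (FF α β s (p0 i)) (FF α β s (p1 i))
      = ∏ i : Fin r, ((bif s i then (-1 : ℂ) else 1) * N (α i) (β i)) := by
    refine Finset.prod_congr rfl fun i _ => ?_
    have h0 := eE_FF_p0 α β s i
    have h1 := eE_FF_p1 α β s i
    cases hsi : s i <;> rw [hsi] at h0 h1 <;> simp only [cond_false, cond_true] at h0 h1 ⊢
    · rw [AA_lr h0 h1, Fin.rev_rev, one_mul]
    · rw [AA_rl h0 h1, Fin.rev_rev]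
      ring
  rw [hprod, Finset.prod_mul_distrib]
  have e1 : ((∏ i : Fin r, (bif s i then (-1:ℤˣ) else 1) : ℤˣ) : ℤ)
      = ∏ i : Fin r, (bif s i then (-1:ℤ) else 1) := by
    rw [show ((∏ i : Fin r, (bif s i then (-1:ℤˣ) else 1) : ℤˣ) : ℤ)
        = Units.coeHom ℤ (∏ i : Fin r, (bif s i then (-1:ℤˣ) else 1)) from rfl,
      map_prod (Units.coeHom ℤ) _ Finset.univ]
    exact Finset.prod_congr rfl fun i _ => by cases s i <;> simp
  have e2 : ((∏ i : Fin r, (bif s i then (-1:ℤ) else 1) : ℤ) : ℂ)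
      = ∏ i : Fin r, (bif s i then (-1:ℂ) else 1) := by
    push_cast
    exact Finset.prod_congr rfl fun i _ => by cases s i <;> simp
  have hsign : ((Equiv.Perm.sign (FF α β s) : ℤ) : ℂ)
      = ((Equiv.Perm.sign α : ℤ) : ℂ) * ((Equiv.Perm.sign β : ℤ) : ℂ) *
        ∏ i : Fin r, (bif s i then (-1 : ℂ) else 1) := by
    rw [sign_FF, sign_Bp, one_mul, Units.val_mul, Int.cast_mul, Units.val_mul, Int.cast_mul,
      e1, e2]
  rw [hsign]
  have hc : (∏ i : Fin r, (bif s i then (-1 : ℂ) else 1)) *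
      (∏ i : Fin r, (bif s i then (-1 : ℂ) else 1)) = 1 := by
    rw [← Finset.prod_mul_distrib]
    apply Finset.prod_eq_one
    intro i _
    cases s i <;> norm_num
  set A := ((Equiv.Perm.sign α : ℤ) : ℂ)
  set B := ((Equiv.Perm.sign β : ℤ) : ℂ)
  set c := ∏ i : Fin r, (bif s i then (-1 : ℂ) else 1)
  set D := ∏ i : Fin r, N (α i) (β i)
  calc A * B * c * (c * D) = (c * c) * (A * B * D) := by ring
  _ = A * B * D := by rw [hc, one_mul]

lemma det_sum_aux (N : Matrix (Fin r) (Fin r) ℂ) :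
    ∑ γ : Equiv.Perm (Fin r), ((Equiv.Perm.sign γ : ℤ) : ℂ) * ∏ i : Fin r, N i (γ i)
      = N.det := by
  rw [← Matrix.det_transpose N, Matrix.det_apply' Nᵀ]
  exact Finset.sum_congr rfl fun γ _ =>
    congrArg _ (Finset.prod_congr rfl fun i _ => rfl)

lemma sum_T (N : Matrix (Fin r) (Fin r) ℂ) :
    ∑ σ : Equiv.Perm (Fin (2*r)), T N σ = (2^r * (r.factorial : ℂ)) * N.det := by
  classical
  set G : (Equiv.Perm (Fin r) × Equiv.Perm (Fin r) × (Fin r → Bool)) → Equiv.Perm (Fin (2*r)) :=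
    fun x => FF x.1 x.2.1 x.2.2 with hG
  have hsum1 : ∑ σ ∈ Finset.univ.image G, T N σ = ∑ σ : Equiv.Perm (Fin (2*r)), T N σ := by
    apply Finset.sum_subset (Finset.subset_univ _)
    intro σ _ hσ
    by_cases hg : ∀ i : Fin r, (eE r (σ (p0 i))).isLeft ≠ (eE r (σ (p1 i))).isLeft
    · obtain ⟨x, hx⟩ := FF_surj σ hg
      exact absurd (Finset.mem_image.mpr ⟨x, Finset.mem_univ x, hx⟩) hσ
    · push_neg at hg
      obtain ⟨i, hi⟩ := hg
      exact T_eq_zero i hi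
  have hsum2 : ∑ σ ∈ Finset.univ.image G, T N σ = ∑ x, T N (G x) :=
    Finset.sum_image (fun x _ y _ h => FF_inj h)
  rw [← hsum1, hsum2]
  have hcard : ∀ c : ℂ, ∑ _s : Fin r → Bool, c = (2^r : ℂ) * c := by
    intro c
    rw [Finset.sum_const, Finset.card_univ, Fintype.card_fun, Fintype.card_bool,
      Fintype.card_fin, nsmul_eq_mul]
    push_cast
    ring
  calc ∑ x, T N (G x)
      = ∑ α : Equiv.Perm (Fin r), ∑ y : Equiv.Perm (Fin r) × (Fin r → Bool), T N (G (α, y)) :=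
        Fintype.sum_prod_type _
    _ = ∑ α : Equiv.Perm (Fin r), ∑ β : Equiv.Perm (Fin r), ∑ s : Fin r → Bool,
          T N (FF α β s) :=
        Finset.sum_congr rfl fun α _ => Fintype.sum_prod_type _
    _ = ∑ α : Equiv.Perm (Fin r), ∑ β : Equiv.Perm (Fin r), ∑ _s : Fin r → Bool,
          (((Equiv.Perm.sign α : ℤ) : ℂ) * ((Equiv.Perm.sign β : ℤ) : ℂ) *
            ∏ i : Fin r, N (α i) (β i)) :=
        Finset.sum_congr rfl fun α _ => Finset.sum_congr rfl fun β _ =>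
          Finset.sum_congr rfl fun s _ => T_FF N α β s
    _ = ∑ α : Equiv.Perm (Fin r), ∑ β : Equiv.Perm (Fin r),
          (2^r : ℂ) * (((Equiv.Perm.sign α : ℤ) : ℂ) * ((Equiv.Perm.sign β : ℤ) : ℂ) *
            ∏ i : Fin r, N (α i) (β i)) :=
        Finset.sum_congr rfl fun α _ => Finset.sum_congr rfl fun β _ => hcard _
    _ = (2^r : ℂ) * ∑ α : Equiv.Perm (Fin r), ∑ β : Equiv.Perm (Fin r),
          (((Equiv.Perm.sign α : ℤ) : ℂ) * ((Equiv.Perm.sign β : ℤ) : ℂ) *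
            ∏ i : Fin r, N (α i) (β i)) := by
        rw [Finset.mul_sum]
        exact Finset.sum_congr rfl fun α _ => (Finset.mul_sum _ _ _).symm
    _ = (2^r : ℂ) * ∑ _α : Equiv.Perm (Fin r), N.det := by
        congr 1
        refine Finset.sum_congr rfl fun α _ => ?_
        have hre : ∀ γ : Equiv.Perm (Fin r),
            ((Equiv.Perm.sign α : ℤ) : ℂ) * ((Equiv.Perm.sign (γ * α) : ℤ) : ℂ) *
              ∏ i : Fin r, N (α i) ((γ * α) i)
            = ((Equiv.Perm.sign γ : ℤ) : ℂ) * ∏ i : Fin r, N i (γ i) := by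
          intro γ
          have h1 : ∏ i : Fin r, N (α i) ((γ * α) i) = ∏ i : Fin r, N i (γ i) :=
            Equiv.prod_comp α (fun j => N j (γ j))
          rw [h1, _root_.map_mul, Units.val_mul, Int.cast_mul]
          have h2 : ((Equiv.Perm.sign α : ℤ) : ℂ) * ((Equiv.Perm.sign α : ℤ) : ℂ) = 1 := by
            rcases Int.units_eq_one_or (Equiv.Perm.sign α) with h | h <;> rw [h] <;> norm_num
          calc ((Equiv.Perm.sign α : ℤ) : ℂ) *
                (((Equiv.Perm.sign γ : ℤ) : ℂ) * ((Equiv.Perm.sign α : ℤ) : ℂ)) *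
                ∏ i : Fin r, N i (γ i)
              = (((Equiv.Perm.sign α : ℤ) : ℂ) * ((Equiv.Perm.sign α : ℤ) : ℂ)) *
                (((Equiv.Perm.sign γ : ℤ) : ℂ) * ∏ i : Fin r, N i (γ i)) := by ring
            _ = ((Equiv.Perm.sign γ : ℤ) : ℂ) * ∏ i : Fin r, N i (γ i) := by rw [h2, one_mul]
        rw [← Fintype.sum_equiv (Equiv.mulRight α)
          (fun γ => ((Equiv.Perm.sign α : ℤ) : ℂ) * ((Equiv.Perm.sign (γ * α) : ℤ) : ℂ) *
            ∏ i : Fin r, N (α i) ((γ * α) i))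
          (fun β => ((Equiv.Perm.sign α : ℤ) : ℂ) * ((Equiv.Perm.sign β : ℤ) : ℂ) *
            ∏ i : Fin r, N (α i) (β i))
          (fun γ => rfl)]
        rw [Finset.sum_congr rfl fun γ _ => hre γ]
        exact det_sum_aux N
    _ = (2^r * (r.factorial : ℂ)) * N.det := by
        rw [Finset.sum_const, Finset.card_univ, Fintype.card_perm, Fintype.card_fin,
          nsmul_eq_mul]
        ring

lemma pf_AA (N : Matrix (Fin r) (Fin r) ℂ) : pf (AA N) = N.det := by
  have hpf : pf (AA N) = (1 / (2 ^ r * (r.factorial : ℂ))) * ∑ σ : Equiv.Perm (Fin (2*r)), T N σ :=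
    rfl
  rw [hpf, sum_T]
  have h2 : (2 : ℂ)^r ≠ 0 := pow_ne_zero _ two_ne_zero
  have hf : (r.factorial : ℂ) ≠ 0 := Nat.cast_ne_zero.mpr r.factorial_ne_zero
  field_simp

end PfSub
open Matrix Equiv

namespace PfSub

variable {n r : ℕ}

lemma orderEmbOfFin_image_rev (J : Finset (Fin n)) (hJ : J.card = r) (b : Fin r) :
    (J.image Fin.rev).orderEmbOfFin
      ((Finset.card_image_of_injective J Fin.rev_injective).trans hJ) b
      = Fin.rev (J.orderEmbOfFin hJ b.rev) := by
  have hmono : StrictMono (fun b : Fin r => Fin.rev (J.orderEmbOfFin hJ b.rev)) := by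
    intro a b hab
    simp only
    rw [Fin.rev_lt_rev]
    exact (J.orderEmbOfFin hJ).strictMono (by rwa [Fin.rev_lt_rev])
  have hmem : ∀ b : Fin r, Fin.rev (J.orderEmbOfFin hJ b.rev) ∈ J.image Fin.rev :=
    fun b => Finset.mem_image_of_mem Fin.rev (Finset.orderEmbOfFin_mem J hJ b.rev)
  have := Finset.orderEmbOfFin_unique
    ((Finset.card_image_of_injective J Fin.rev_injective).trans hJ) hmem hmono
  exact (congrFun this b).symm

end PfSub

open PfSub in
/-- Sub-Pfaffians of `S(M) = [[0, M̃], [-M̃ᵀ, 0]]` compute arbitrary minors of `M`: for finsets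
`I, J ⊆ Fin n` with `|I| = |J| = r`, the Pfaffian of the principal submatrix of `S(M)` on
`(inl '' I) ∪ (inr '' J̃)` (with `J̃` the reversed image of `J`, indices ordered as `I`
increasing followed by `J̃` increasing) equals `det (M_{I,J})`. -/
theorem pf_submatrix_fromBlocks_eq_det_minor {n r : ℕ} (M : Matrix (Fin n) (Fin n) ℂ)
    (I J : Finset (Fin n)) (hI : I.card = r) (hJ : J.card = r) :
    pf ((Matrix.fromBlocks 0 (M.submatrix id Fin.rev) (-(M.submatrix id Fin.rev)ᵀ) 0).submatrix
        (fun i : Fin (2 * r) =>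
          Sum.map (I.orderEmbOfFin hI)
            ((J.image Fin.rev).orderEmbOfFin
              ((Finset.card_image_of_injective J Fin.rev_injective).trans hJ))
            (finSumFinEquiv.symm (Fin.cast (by omega : 2 * r = r + r) i)))
        (fun i : Fin (2 * r) =>
          Sum.map (I.orderEmbOfFin hI)
            ((J.image Fin.rev).orderEmbOfFin
              ((Finset.card_image_of_injective J Fin.rev_injective).trans hJ))
            (finSumFinEquiv.symm (Fin.cast (by omega : 2 * r = r + r) i)))) =
      (M.submatrix (I.orderEmbOfFin hI) (J.orderEmbOfFin hJ)).det := by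
  set f := I.orderEmbOfFin hI
  set g := (J.image Fin.rev).orderEmbOfFin
    ((Finset.card_image_of_injective J Fin.rev_injective).trans hJ)
  set oJ := J.orderEmbOfFin hJ
  have hmat : (Matrix.fromBlocks 0 (M.submatrix id Fin.rev) (-(M.submatrix id Fin.rev)ᵀ)
        0).submatrix
        (fun i : Fin (2 * r) => Sum.map f g
          (finSumFinEquiv.symm (Fin.cast (by omega : 2 * r = r + r) i)))
        (fun i : Fin (2 * r) => Sum.map f g
          (finSumFinEquiv.symm (Fin.cast (by omega : 2 * r = r + r) i)))
      = AA (M.submatrix f oJ) := by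
    ext k l
    have he : ∀ k : Fin (2*r),
        (finSumFinEquiv.symm (Fin.cast (by omega : 2 * r = r + r) k) : Fin r ⊕ Fin r)
          = eE r k := fun _ => rfl
    rw [Matrix.submatrix_apply, he k, he l, AA, Matrix.submatrix_apply]
    have hg : ∀ b : Fin r, Fin.rev (g b) = oJ b.rev := by
      intro b
      rw [show g b = Fin.rev (oJ b.rev) from orderEmbOfFin_image_rev J hJ b, Fin.rev_rev]
    rcases eE r k with a | b <;> rcases eE r l with a' | b' <;>
      simp only [Sum.map_inl, Sum.map_inr, Matrix.fromBlocks_apply₁₁,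
        Matrix.fromBlocks_apply₁₂, Matrix.fromBlocks_apply₂₁, Matrix.fromBlocks_apply₂₂,
        Matrix.zero_apply, Matrix.submatrix_apply, Matrix.neg_apply, Matrix.transpose_apply,
        Matrix.of_apply, id_eq]
    · rw [hg b']
    · rw [hg b]
  rw [hmat, pf_AA]
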